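/- Let G(M) = (N, X, π) be the bottleneck congestion game corresponding to a congestion model M = (N, F, X, (c_f)_{f∈F}). Then G(M) has the π-LIP: for every improving move (x, (y_S, x_{−S})) of any nonempty coalition S ⊆ N, the vector (π_i(y_S, x_{−S}))_{i∈N} is strictly sorted-lexicographically smaller than (π_i(x))_{i∈N}. -/

import Mathlib

open Finset

/-- The vector `a` sorted in non-increasing order. -/
noncomputable def sortDesc {α : Type*} [LinearOrder α] {q : ℕ} (a : Fin q → α) : Fin q → α :=
  fun i => a (Tuple.sort a i.rev)

/-- `a` is strictly sorted-lexicographically smaller than `b`. -/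
def SLexLt {α : Type*} [LinearOrder α] {q : ℕ} (a b : Fin q → α) : Prop :=
  ∃ m : Fin q, (∀ i, i < m → sortDesc a i = sortDesc b i) ∧ sortDesc a m < sortDesc b m

/-- Sorted-lexicographic comparison of vectors indexed by an arbitrary finite type. -/
def SLexLtOn {α : Type*} [LinearOrder α] {ι : Type*} [Fintype ι] (a b : ι → α) : Prop :=
  SLexLt (a ∘ (Fintype.equivFin ι).symm) (b ∘ (Fintype.equivFin ι).symm)

/-- An improving move: some nonempty coalition `S` deviates (players outside `S`
keep their strategies) and every member of `S` strictly decreases her cost. -/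

lemma sortDesc_antitone {q : ℕ} (a : Fin q → ℝ) : Antitone (sortDesc a) := by
  intro i j hij
  exact Tuple.monotone_sort a (Fin.rev_le_rev.mpr hij)

lemma card_sortDesc {q : ℕ} (a : Fin q → ℝ) (s : ℝ) :
    Fintype.card {i // s ≤ sortDesc a i} = Fintype.card {i // s ≤ a i} := by
  refine Fintype.card_congr (Equiv.subtypeEquiv (Fin.revPerm.trans (Tuple.sort a)) ?_)
  intro i
  simp [sortDesc]

lemma slex_of_aux {q : ℕ} (a b : Fin q → ℝ) (h1 : ∃ i, a i < b i)
    (h2 : ∀ i, b i < a i → ∃ j, a i ≤ a j ∧ a j < b j) : SLexLt a b := by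
  classical
  obtain ⟨i0, hi0⟩ := h1
  set T : Finset (Fin q) := univ.filter (fun j => a j < b j) with hT
  have hTne : T.Nonempty := ⟨i0, by simp [hT, hi0]⟩
  obtain ⟨j0, hj0T, hj0max⟩ := T.exists_max_image b hTne
  have hj0 : a j0 < b j0 := by simpa [hT] using hj0T
  set t : ℝ := b j0 with ht
  -- pointwise fact
  have hP : ∀ i, t ≤ a i → a i ≤ b i := by
    intro i hi
    by_contra hc
    obtain ⟨j, hij, hjb⟩ := h2 i (lt_of_not_ge hc)
    have : b j ≤ t := hj0max j (by simp [hT, hjb])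
    linarith
  set A := sortDesc a with hA
  set B := sortDesc b with hB
  have hAanti := sortDesc_antitone a
  have hBanti := sortDesc_antitone b
  have hAiff : ∀ (s : ℝ) (j : Fin q), (j : ℕ) < Fintype.card {i // s ≤ a i} ↔ s ≤ A j := by
    intro s j
    rw [← card_sortDesc a s]
    rw [Fintype.card_subtype]
    convert Tuple.lt_card_ge_iff_apply_ge_of_antitone (j := j) (a := s) hAanti
  have hBiff : ∀ (s : ℝ) (j : Fin q), (j : ℕ) < Fintype.card {i // s ≤ b i} ↔ s ≤ B j := by
    intro s j
    rw [← card_sortDesc b s]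
    rw [Fintype.card_subtype]
    convert Tuple.lt_card_ge_iff_apply_ge_of_antitone (j := j) (a := s) hBanti
  have hle : ∀ s : ℝ, t ≤ s →
      Fintype.card {i // s ≤ a i} ≤ Fintype.card {i // s ≤ b i} := by
    intro s hs
    apply Fintype.card_le_of_injective
      (fun u => ⟨u.1, u.2.trans (hP u.1 (hs.trans u.2))⟩)
    intro u v huv
    have h := congrArg Subtype.val huv
    exact Subtype.ext h
  have hstrict : Fintype.card {i // t ≤ a i} < Fintype.card {i // t ≤ b i} := by
    rw [Fintype.card_subtype, Fintype.card_subtype]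
    apply Finset.card_lt_card
    constructor
    · intro i hi
      simp only [mem_filter, mem_univ, true_and] at hi ⊢
      exact hi.trans (hP i hi)
    · intro hsub
      have := hsub (by simp [ht] : j0 ∈ univ.filter (fun i => t ≤ b i))
      simp only [mem_filter, mem_univ, true_and] at this
      linarith
  set p : ℕ := Fintype.card {i // t ≤ a i} with hp
  have hpq : p < q := by
    have h1 : Fintype.card {i // t ≤ b i} ≤ q := by
      simpa using Fintype.card_subtype_le (fun i : Fin q => t ≤ b i)
    omega
  set m0 : Fin q := ⟨p, hpq⟩ with hm0
  have hAm0 : A m0 < t := by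
    refine lt_of_not_ge fun h => ?_
    have := (hAiff t m0).mpr h
    simp [hm0, ← hp] at this
  have hBm0 : t ≤ B m0 := (hBiff t m0).mp (by simpa [hm0, ← hp] using hstrict)
  set S : Finset (Fin q) := univ.filter (fun k => A k ≠ B k) with hS
  have hSne : S.Nonempty := ⟨m0, by simp [hS]; exact ne_of_lt (lt_of_lt_of_le hAm0 hBm0)⟩
  set m : Fin q := S.min' hSne with hm
  have hmS : m ∈ S := S.min'_mem hSne
  have hmne : A m ≠ B m := by simpa [hS] using hmS
  have hmm0 : m ≤ m0 := S.min'_le m0 (by simp [hS]; exact ne_of_lt (lt_of_lt_of_le hAm0 hBm0))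
  have hpre : ∀ i, i < m → A i = B i := by
    intro i hi
    by_contra hc
    exact absurd (S.min'_le i (by simp [hS, hc])) (not_le.mpr hi)
  have hlt : A m < B m := by
    rcases lt_or_eq_of_le hmm0 with h | h
    · have htm : t ≤ A m := (hAiff t m).mp (by simpa [hm0, ← hp] using (Fin.lt_iff_val_lt_val.mp h))
      have h1 : (m : ℕ) < Fintype.card {i // A m ≤ a i} := (hAiff (A m) m).mpr le_rfl
      have h2 : (m : ℕ) < Fintype.card {i // A m ≤ b i} := lt_of_lt_of_le h1 (hle (A m) htm)
      exact lt_of_le_of_ne ((hBiff (A m) m).mp h2) hmne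
    · rw [h]; exact lt_of_lt_of_le hAm0 hBm0
  exact ⟨m, hpre, hlt⟩

def ImprovingMove {ι : Type*} {X : ι → Type*} {β : Type*} [Preorder β]
    (π : (∀ i, X i) → ι → β) (x y : ∀ i, X i) : Prop :=
  ∃ S : Finset ι, S.Nonempty ∧ (∀ i ∉ S, y i = x i) ∧ ∀ i ∈ S, π y i < π x i

/-- Every bottleneck congestion game has the π-LIP: along any
improving move the vector of private costs strictly decreases in the sorted
lexicographical order. Here `Xi i` is the (finite, nonempty) collection of
strategies (nonempty facility sets) of player `i`, and the facility costs
`c f` are non-negative, independent of irrelevant choices and monotone. -/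
theorem stmt_11 {ι F : Type*} [Fintype ι] [Nonempty ι] [Fintype F] [DecidableEq F]
    (Xi : ι → Finset (Finset F)) (hXi : ∀ i, (Xi i).Nonempty)
    (hstrat : ∀ i, ∀ s ∈ Xi i, s.Nonempty)
    (c : F → (ι → Finset F) → ℝ)
    (hnn : ∀ (f : F) (x : ι → Finset F), (∀ i, x i ∈ Xi i) → 0 ≤ c f x)
    (hiic : ∀ (f : F) (x y : ι → Finset F), (∀ i, x i ∈ Xi i) → (∀ i, y i ∈ Xi i) →
      (∀ i, f ∈ x i ↔ f ∈ y i) → c f x = c f y)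
    (hmono : ∀ (f : F) (x y : ι → Finset F), (∀ i, x i ∈ Xi i) → (∀ i, y i ∈ Xi i) →
      (∀ i, f ∈ x i → f ∈ y i) → c f x ≤ c f y)
    (π : (ι → Finset F) → ι → ℝ)
    (hπ : ∀ (x : ι → Finset F) (hx : ∀ j, x j ∈ Xi j) (i : ι),
      π x i = (x i).sup' (hstrat i (x i) (hx i)) (fun f => c f x)) :
    ∀ x y : ι → Finset F, (∀ i, x i ∈ Xi i) → (∀ i, y i ∈ Xi i) →
      ImprovingMove π x y → SLexLtOn (π y) (π x) := by
  intro x y hx hy hmove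
  classical
  obtain ⟨S, hSne, hout, himp⟩ := hmove
  set a : ι → ℝ := π y with ha
  set b : ι → ℝ := π x with hb
  have h1 : ∃ i, a i < b i := ⟨hSne.choose, himp _ hSne.choose_spec⟩
  have h2 : ∀ i, b i < a i → ∃ j, a i ≤ a j ∧ a j < b j := by
    intro i hlt
    have hiS : i ∉ S := fun h => absurd (himp i h) (not_lt.mpr (le_of_lt hlt))
    have hyx : y i = x i := hout i hiS
    obtain ⟨f, hf, hfy⟩ := Finset.exists_mem_eq_sup' (hstrat i (y i) (hy i)) (fun f => c f y)
    have hay : a i = c f y := by rw [ha, hπ y hy i, hfy]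
    have hcfx : c f x ≤ b i := by
      rw [hb, hπ x hx i]
      exact Finset.le_sup' (fun f => c f x) (hyx ▸ hf)
    have hmono' : ¬ ∀ j, f ∈ y j → f ∈ x j := by
      intro hall
      have := hmono f y x hy hx hall
      rw [← hay] at this
      linarith
    push_neg at hmono'
    obtain ⟨j, hfj, hfjx⟩ := hmono'
    have hjS : j ∈ S := by
      by_contra hc
      exact hfjx (hout j hc ▸ hfj)
    refine ⟨j, ?_, himp j hjS⟩
    rw [hay, ha, hπ y hy j]
    exact Finset.le_sup' (fun f => c f y) hfj
  unfold SLexLtOn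
  set e := Fintype.equivFin ι with he
  apply slex_of_aux
  · obtain ⟨i, hi⟩ := h1
    exact ⟨e i, by simpa using hi⟩
  · intro i hlt
    obtain ⟨j, hj1, hj2⟩ := h2 (e.symm i) (by simpa using hlt)
    exact ⟨e j, by simpa using hj1, by simpa using hj2⟩
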